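/- Let G be a finite simple graph, let k ≥ 1 be an integer, and let C₁,…,C_p be pairwise disjoint nonempty vertex sets ('clusters') of G. Then there exists a finite family of subgraphs of G, each of which is a tree with a designated root, such that: (1) the root and every leaf of each tree is a vertex of some cluster; (2) every vertex of each tree is at distance at most k from the root within that tree; (3) every cluster C_i that is not distance-k isolated contains exactly one vertex w that is a leaf of a tree in the family whose root lies in a cluster different from C_i; and (4) every edge of G belongs to at most 4 of the trees in the family. -/

import Mathlib

open SimpleGraph

/-- `FarApart G k A B` : the `G`-distance between the vertex sets `A` and `B` is
strictly greater than `k`. -/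
def FarApart {V : Type} (G : SimpleGraph V) (k : ℕ) (A B : Set V) : Prop :=
  ∀ u ∈ A, ∀ v ∈ B, ∀ p : G.Walk u v, k < p.length

/-- `IsLeaf G T r v` : `v` is a leaf of the rooted tree `T` (a subgraph of `G`) with
root `r`, i.e. `v` is a vertex of `T` distinct from the root with exactly one
neighbour inside `T`. -/
def IsLeaf {V : Type} {G : SimpleGraph V} (T : G.Subgraph) (r v : V) : Prop :=
  v ∈ T.verts ∧ v ≠ r ∧ (T.neighborSet v).ncard = 1

/-- `WithinTreeDist G T u v d` : `u` and `v` are vertices of the subgraph `T` joined by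
a walk of length at most `d` inside `T`. -/
def WithinTreeDist {V : Type} {G : SimpleGraph V} (T : G.Subgraph) (u v : V) (d : ℕ) : Prop :=
  ∃ (hu : u ∈ T.verts) (hv : v ∈ T.verts) (w : T.coe.Walk ⟨u, hu⟩ ⟨v, hv⟩), w.length ≤ d

/-- A cluster `C i` is distance-`k` isolated (within the collection `C`) if every other
cluster is at `G`-distance strictly greater than `k` from it. -/
def DistIsolated {V : Type} (G : SimpleGraph V) (k : ℕ) {p : ℕ}
    (C : Fin p → Set V) (i : Fin p) : Prop :=
  ∀ j, j ≠ i → FarApart G k (C i) (C j)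

namespace St5

variable {V : Type} {G : SimpleGraph V}

/-! ### Splitting a walk at an index -/

lemma walk_split {a b : V} (w : G.Walk a b) (m : ℕ) (hm : m ≤ w.length) :
    ∃ (w1 : G.Walk a (w.getVert m)) (w2 : G.Walk (w.getVert m) b),
      w1.length = m ∧ w2.length = w.length - m := by
  induction w generalizing m with
  | nil =>
    have hm0 : m = 0 := by simpa using hm
    subst hm0
    exact ⟨Walk.nil, Walk.nil, rfl, rfl⟩
  | @cons u x v hadj w ih =>
    match m with
    | 0 => exact ⟨Walk.nil, Walk.cons hadj w, rfl, rfl⟩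
    | (m + 1) =>
      obtain ⟨w1, w2, h1, h2⟩ := ih m (by simpa [Nat.succ_le_succ_iff] using hm)
      exact ⟨Walk.cons hadj w1, w2, by simp [h1], by simpa using h2⟩

/-! ### Generic rooted tree builder -/

def treeSub (G : SimpleGraph V) (Q : Set V) (ρ : V) (PT : V → V) : G.Subgraph where
  verts := Q
  Adj x y := x ∈ Q ∧ y ∈ Q ∧ G.Adj x y ∧ ((x ≠ ρ ∧ y = PT x) ∨ (y ≠ ρ ∧ x = PT y))
  adj_sub h := h.2.2.1
  edge_vert h := h.1
  symm := ⟨fun x y h => ⟨h.2.1, h.1, h.2.2.1.symm, h.2.2.2.symm⟩⟩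

section Tree

variable {Q : Set V} {ρ : V} {PT : V → V} {rk : V → ℕ}

lemma treeSub_verts : (treeSub G Q ρ PT).verts = Q := rfl

lemma walkToRoot (hρ : ρ ∈ Q)
    (hstep : ∀ w ∈ Q, w ≠ ρ → PT w ∈ Q ∧ G.Adj w (PT w) ∧ rk w = rk (PT w) + 1)
    (hzero : ∀ w ∈ Q, rk w = 0 → w = ρ) :
    ∀ (n : ℕ) (w : V) (hw : w ∈ Q), rk w ≤ n →
      ∃ pw : (treeSub G Q ρ PT).coe.Walk ⟨w, hw⟩ ⟨ρ, hρ⟩, pw.length ≤ rk w := by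
  intro n
  induction n with
  | zero =>
    intro w hw hle
    have hwρ : w = ρ := hzero w hw (Nat.le_zero.mp hle)
    subst hwρ
    exact ⟨Walk.nil, by simp⟩
  | succ n ih =>
    intro w hw hle
    by_cases hwρ : w = ρ
    · subst hwρ; exact ⟨Walk.nil, by simp⟩
    · obtain ⟨hPQ, hGadj, hrk⟩ := hstep w hw hwρ
      have hadj : (treeSub G Q ρ PT).coe.Adj ⟨w, hw⟩ ⟨PT w, hPQ⟩ :=
        ⟨hw, hPQ, hGadj, Or.inl ⟨hwρ, rfl⟩⟩
      obtain ⟨pw, hpw⟩ := ih (PT w) hPQ (by omega)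
      exact ⟨Walk.cons hadj pw, by rw [Walk.length_cons]; omega⟩

lemma treeSub_connected (hρ : ρ ∈ Q)
    (hstep : ∀ w ∈ Q, w ≠ ρ → PT w ∈ Q ∧ G.Adj w (PT w) ∧ rk w = rk (PT w) + 1)
    (hzero : ∀ w ∈ Q, rk w = 0 → w = ρ) :
    (treeSub G Q ρ PT).coe.Connected := by
  haveI : Nonempty ((treeSub G Q ρ PT).verts) := ⟨⟨ρ, hρ⟩⟩
  refine ⟨fun a b => ?_⟩
  obtain ⟨p1, -⟩ := walkToRoot hρ hstep hzero (rk a.1) a.1 a.2 le_rfl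
  obtain ⟨p2, -⟩ := walkToRoot hρ hstep hzero (rk b.1) b.1 b.2 le_rfl
  exact p1.reachable.trans p2.reachable.symm

lemma treeSub_acyclic
    (hstep : ∀ w ∈ Q, w ≠ ρ → PT w ∈ Q ∧ G.Adj w (PT w) ∧ rk w = rk (PT w) + 1) :
    (treeSub G Q ρ PT).coe.IsAcyclic := by
  intro v c hc
  classical
  obtain ⟨x, hxmem, hxmax⟩ :=
    (c.support.toFinset).exists_max_image (fun a => rk a.1)
      ⟨v, by simp [Walk.start_mem_support]⟩
  rw [List.mem_toFinset] at hxmem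
  have hxmax' : ∀ y ∈ c.support, rk y.1 ≤ rk x.1 := fun y hy =>
    hxmax y (List.mem_toFinset.mpr hy)
  -- key dichotomy
  have key : ∀ a b : (treeSub G Q ρ PT).verts,
      (treeSub G Q ρ PT).coe.Adj a b → rk b.1 ≤ rk a.1 → b.1 = PT a.1 := by
    rintro a b ⟨haQ, hbQ, hG, (⟨_, h⟩ | ⟨hbρ, h⟩)⟩ hle
    · exact h
    · obtain ⟨-, -, hrk⟩ := hstep b.1 hbQ hbρ
      rw [← h] at hrk
      omega
  have main : ∀ d : (treeSub G Q ρ PT).coe.Walk x x, d.IsCycle →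
      (∀ y ∈ d.support, rk y.1 ≤ rk x.1) → False := by
    intro d hd hmax
    cases d with
    | nil => exact hd.ne_nil rfl
    | @cons _ y _ hadjxy q =>
      rw [Walk.cons_isCycle_iff] at hd
      obtain ⟨hq, hxe⟩ := hd
      have hymem : y ∈ (Walk.cons hadjxy q).support := by simp [Walk.support_cons]
      have hy : y.1 = PT x.1 := key x y hadjxy (hmax y hymem)
      have hqlen : q.length ≠ 0 := by
        intro h0
        have : y = x := q.eq_of_length_eq_zero h0
        subst this
        exact (treeSub G Q ρ PT).coe.irrefl hadjxy
      have hrevnil : ¬ q.reverse.Nil := by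
        rw [Walk.nil_iff_length_eq]
        simpa using hqlen
      cases hQrev : q.reverse with
      | nil => rw [hQrev] at hrevnil; simp at hrevnil
      | @cons _ z _ hadjxz r =>
        have hzmem : z ∈ (Walk.cons hadjxy q).support := by
          have hz1 : z ∈ q.reverse.support := by
            rw [hQrev]; simp [Walk.support_cons]
          rw [Walk.support_reverse, List.mem_reverse] at hz1
          simp [Walk.support_cons, hz1]
        have hz : z.1 = PT x.1 := key x z hadjxz (hmax z hzmem)
        have hzy : z = y := Subtype.ext (hz.trans hy.symm)
        have hedge : s(x, z) ∈ q.reverse.edges := by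
          rw [hQrev]; simp [Walk.edges_cons]
        rw [Walk.edges_reverse, List.mem_reverse, hzy] at hedge
        have : s(x, y) ∈ q.edges := by
          convert hedge using 2
        exact hxe this
  have hcyc' : (c.rotate x hxmem).IsCycle := hc.rotate hxmem
  apply main (c.rotate x hxmem) hcyc'
  intro y hy
  have hsupp : (c.rotate x hxmem).support.tail ~r c.support.tail :=
    Walk.support_rotate c x hxmem
  rcases List.mem_cons.mp (by rwa [Walk.support_eq_cons (c.rotate x hxmem)] at hy) with h | h
  · subst h; exact le_rfl
  · exact hxmax' y (List.tail_subset _ (hsupp.perm.mem_iff.mp h))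

lemma treeSub_isTree (hρ : ρ ∈ Q)
    (hstep : ∀ w ∈ Q, w ≠ ρ → PT w ∈ Q ∧ G.Adj w (PT w) ∧ rk w = rk (PT w) + 1)
    (hzero : ∀ w ∈ Q, rk w = 0 → w = ρ) :
    (treeSub G Q ρ PT).coe.IsTree :=
  ⟨treeSub_connected hρ hstep hzero, treeSub_acyclic hstep⟩

lemma treeSub_leaf_iff
    (hstep : ∀ w ∈ Q, w ≠ ρ → PT w ∈ Q ∧ G.Adj w (PT w) ∧ rk w = rk (PT w) + 1)
    (w : V) [Fintype V] :
    IsLeaf (treeSub G Q ρ PT) ρ w ↔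
      w ∈ Q ∧ w ≠ ρ ∧ ∀ y ∈ Q, y ≠ ρ → PT y ≠ w := by
  constructor
  · rintro ⟨hwQ, hwρ, hcard⟩
    refine ⟨hwQ, hwρ, ?_⟩
    intro y hyQ hyρ hPTy
    obtain ⟨hPQ, hG, hrk⟩ := hstep w hwQ hwρ
    obtain ⟨hPQy, hGy, hrky⟩ := hstep y hyQ hyρ
    have h1 : PT w ∈ (treeSub G Q ρ PT).neighborSet w := ⟨hwQ, hPQ, hG, Or.inl ⟨hwρ, rfl⟩⟩
    have h2 : y ∈ (treeSub G Q ρ PT).neighborSet w := by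
      refine ⟨hwQ, hyQ, ?_, Or.inr ⟨hyρ, hPTy.symm⟩⟩
      · rw [← hPTy]; exact hGy.symm
    have hne : PT w ≠ y := by
      intro h
      rw [hPTy] at hrky
      rw [h] at hrk
      omega
    have hle : ({PT w, y} : Set V).ncard ≤ ((treeSub G Q ρ PT).neighborSet w).ncard := by
      refine Set.ncard_le_ncard ?_ (Set.toFinite _)
      rintro z (rfl | rfl) <;> assumption
    rw [Set.ncard_pair hne] at hle
    omega
  · rintro ⟨hwQ, hwρ, hnoc⟩
    refine ⟨hwQ, hwρ, ?_⟩
    obtain ⟨hPQ, hG, -⟩ := hstep w hwQ hwρ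
    have hset : (treeSub G Q ρ PT).neighborSet w = {PT w} := by
      ext y
      constructor
      · rintro ⟨-, hyQ, hGwy, (⟨-, h⟩ | ⟨hyρ, h⟩)⟩
        · exact h
        · exact absurd h.symm (hnoc y hyQ hyρ)
      · rintro rfl
        exact ⟨hwQ, hPQ, hG, Or.inl ⟨hwρ, rfl⟩⟩
    rw [hset, Set.ncard_singleton]

end Tree

/-! ### Shortest-path forest towards a set `S` -/

section Forest
open scoped Classical

variable (G) (S : Set V)

def lengths (v : V) : Set ℕ := {n | ∃ s ∈ S, ∃ w : G.Walk v s, w.length = n}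

def Rch (v : V) : Prop := (lengths G S v).Nonempty

noncomputable def dd (v : V) : ℕ := sInf (lengths G S v)

lemma dd_def (v : V) : dd G S v = sInf (lengths G S v) := rfl

variable {G S}

lemma Rch_of_mem {v : V} (hv : v ∈ S) : Rch G S v := ⟨0, v, hv, Walk.nil, rfl⟩

lemma dd_zero_of_mem {v : V} (hv : v ∈ S) : dd G S v = 0 :=
  Nat.le_zero.mp (Nat.sInf_le ⟨v, hv, Walk.nil, rfl⟩)

lemma mem_of_dd_zero {v : V} (h : Rch G S v) (h0 : dd G S v = 0) : v ∈ S := by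
  obtain ⟨s, hs, w, hw⟩ := Nat.sInf_mem h
  rw [← dd_def, h0] at hw
  rwa [w.eq_of_length_eq_zero hw]

lemma par_exists {v : V} (h : Rch G S v) (h0 : dd G S v ≠ 0) :
    ∃ u, G.Adj v u ∧ Rch G S u ∧ dd G S u + 1 = dd G S v := by
  obtain ⟨s, hs, w, hw⟩ := Nat.sInf_mem h
  cases w with
  | nil => rw [Walk.length_nil] at hw; exact absurd hw.symm h0
  | @cons _ u _ hadj w' =>
    have hru : Rch G S u := ⟨w'.length, s, hs, w', rfl⟩
    refine ⟨u, hadj, hru, ?_⟩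
    have h1 : dd G S u ≤ w'.length := Nat.sInf_le ⟨s, hs, w', rfl⟩
    rw [← dd_def] at hw
    have h2 : w'.length + 1 = dd G S v := by rw [← hw]; simp
    obtain ⟨s', hs', w'', hw''⟩ := Nat.sInf_mem hru
    rw [← dd_def] at hw''
    have h3 : dd G S v ≤ dd G S u + 1 :=
      Nat.sInf_le ⟨s', hs', Walk.cons hadj w'', by simp [hw'']⟩
    omega

variable (G S) in
noncomputable def parS (v : V) : V :=
  if h : Rch G S v ∧ dd G S v ≠ 0 then (par_exists h.1 h.2).choose else v

lemma par_spec {v : V} (h : Rch G S v) (h0 : dd G S v ≠ 0) :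
    G.Adj v (parS G S v) ∧ Rch G S (parS G S v) ∧ dd G S (parS G S v) + 1 = dd G S v := by
  rw [parS, dif_pos (⟨h, h0⟩ : Rch G S v ∧ dd G S v ≠ 0)]
  exact (par_exists h h0).choose_spec

lemma iter_spec {v : V} (h : Rch G S v) :
    ∀ n, n ≤ dd G S v →
      Rch G S ((parS G S)^[n] v) ∧ dd G S ((parS G S)^[n] v) + n = dd G S v := by
  intro n
  induction n with
  | zero => intro _; simpa using h
  | succ n ih =>
    intro hn
    obtain ⟨h1, h2⟩ := ih (by omega)
    have h0 : dd G S ((parS G S)^[n] v) ≠ 0 := by omega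
    rw [Function.iterate_succ_apply']
    obtain ⟨-, hr, hd⟩ := par_spec h1 h0
    exact ⟨hr, by omega⟩

variable (G S) in
noncomputable def rootOf (v : V) : V := (parS G S)^[dd G S v] v

lemma rootOf_def (v : V) : rootOf G S v = (parS G S)^[dd G S v] v := rfl

lemma rootOf_mem {v : V} (h : Rch G S v) : rootOf G S v ∈ S := by
  obtain ⟨h1, h2⟩ := iter_spec h (dd G S v) le_rfl
  have h1' : Rch G S (rootOf G S v) := h1
  have h2' : dd G S (rootOf G S v) + dd G S v = dd G S v := h2
  exact mem_of_dd_zero h1' (by omega)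

lemma rootOf_of_zero {v : V} (h0 : dd G S v = 0) : rootOf G S v = v := by
  rw [rootOf, h0, Function.iterate_zero_apply]

lemma rootOf_iter {v : V} (h : Rch G S v) {n : ℕ} (hn : n ≤ dd G S v) :
    rootOf G S ((parS G S)^[n] v) = rootOf G S v := by
  have h2 : dd G S ((parS G S)^[n] v) + n = dd G S v := (iter_spec h n hn).2
  rw [rootOf_def, rootOf_def, ← Function.iterate_add_apply, h2]

variable (G S) in
def onP (w x : V) : Prop := Rch G S x ∧ ∃ n, n ≤ dd G S x ∧ w = (parS G S)^[n] x

lemma onP.rch {w x : V} (h : onP G S w x) : Rch G S w := by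
  obtain ⟨hx, n, hn, rfl⟩ := h
  exact (iter_spec hx n hn).1

lemma onP.dd_le {w x : V} (h : onP G S w x) : dd G S w ≤ dd G S x := by
  obtain ⟨hx, n, hn, rfl⟩ := h
  have := (iter_spec hx n hn).2
  omega

lemma onP.rootOf_eq {w x : V} (h : onP G S w x) : rootOf G S w = rootOf G S x := by
  obtain ⟨hx, n, hn, rfl⟩ := h
  exact rootOf_iter hx hn

lemma onP.eq_iter {w x : V} (h : onP G S w x) :
    w = (parS G S)^[dd G S x - dd G S w] x := by
  obtain ⟨hx, n, hn, rfl⟩ := h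
  have := (iter_spec hx n hn).2
  have harr : dd G S x - dd G S ((parS G S)^[n] x) = n := by omega
  rw [harr]

lemma onP_self {x : V} (h : Rch G S x) : onP G S x x :=
  ⟨h, 0, Nat.zero_le _, by simp⟩

lemma onP_rootOf {x : V} (h : Rch G S x) : onP G S (rootOf G S x) x :=
  ⟨h, dd G S x, le_rfl, rfl⟩

lemma onP_par {w x : V} (h : onP G S w x) (h0 : dd G S w ≠ 0) : onP G S (parS G S w) x := by
  obtain ⟨hx, n, hn, rfl⟩ := h
  have hd := (iter_spec hx n hn).2
  exact ⟨hx, n + 1, by omega, by rw [Function.iterate_succ_apply']⟩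

lemma onP_pred {w x : V} (h : onP G S w x) (hlt : dd G S w < dd G S x) :
    ∃ y, onP G S y x ∧ parS G S y = w ∧ dd G S y = dd G S w + 1 := by
  have hx := h.1
  have hwd := h.dd_le
  obtain ⟨m, hm⟩ : ∃ m, dd G S x - dd G S w = m + 1 := ⟨dd G S x - dd G S w - 1, by omega⟩
  have hiter := (iter_spec hx m (by omega)).2
  refine ⟨(parS G S)^[m] x, ⟨hx, m, by omega, rfl⟩, ?_, by omega⟩
  rw [← Function.iterate_succ_apply' (parS G S) m x, h.eq_iter, hm]

end Forest

end St5

open St5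

theorem statement5 {V : Type} [Fintype V] (G : SimpleGraph V) (k : ℕ) (hk : 1 ≤ k)
    (p : ℕ) (C : Fin p → Set V)
    (hdisj : ∀ i j, i ≠ j → Disjoint (C i) (C j))
    (hne : ∀ i, (C i).Nonempty) :
    ∃ (m : ℕ) (T : Fin m → G.Subgraph) (root : Fin m → V),
      (∀ t, root t ∈ (T t).verts) ∧
      (∀ t, (T t).coe.IsTree) ∧
      -- (1) the root and every leaf of each tree is a vertex of some cluster
      (∀ t, ∃ i, root t ∈ C i) ∧
      (∀ t v, IsLeaf (T t) (root t) v → ∃ i, v ∈ C i) ∧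
      -- (2) every vertex of each tree is within distance `k` of the root inside the tree
      (∀ t, ∀ v ∈ (T t).verts, WithinTreeDist (T t) v (root t) k) ∧
      -- (3) every non distance-`k` isolated cluster contains exactly one vertex that is
      -- a leaf of a tree whose root lies in a different cluster
      (∀ i, ¬ DistIsolated G k C i →
        ∃! w : V, w ∈ C i ∧
          ∃ t, IsLeaf (T t) (root t) w ∧ ∃ j, j ≠ i ∧ root t ∈ C j) ∧
      -- (4) every edge of `G` belongs to at most `4` of the trees
      (∀ e ∈ G.edgeSet, {t : Fin m | e ∈ (T t).edgeSet}.ncard ≤ 4) := by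
  classical
  by_cases hiso : ∀ i, DistIsolated G k C i
  · refine ⟨0, Fin.elim0, Fin.elim0, fun t => t.elim0, fun t => t.elim0, fun t => t.elim0,
      fun t => t.elim0, fun t => t.elim0, fun i hi => absurd (hiso i) hi, ?_⟩
    intro e _
    have h0 : {t : Fin 0 | e ∈ ((Fin.elim0 : Fin 0 → G.Subgraph) t).edgeSet} = ∅ :=
      Set.eq_empty_of_isEmpty _
    rw [h0]
    simp
  · push_neg at hiso
    obtain ⟨i₀, hi₀⟩ := hiso
    obtain ⟨v₀, hv₀⟩ := hne i₀
    haveI : Nonempty V := ⟨v₀⟩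
    set S : Set V := ⋃ j, C j with hSdef
    have cluster_unique : ∀ {a : V} {i j : Fin p}, a ∈ C i → a ∈ C j → i = j := by
      intro a i j hi hj
      by_contra hij
      exact Set.disjoint_left.mp (hdisj i j hij) hi hj
    set cl : V → Fin p := fun s => if h : ∃ i, s ∈ C i then h.choose else i₀ with hcl_def
    have cl_eq : ∀ {s : V} {i : Fin p}, s ∈ C i → cl s = i := by
      intro s i hsi
      have h : ∃ i, s ∈ C i := ⟨i, hsi⟩
      rw [hcl_def]
      simp only []
      rw [dif_pos h]
      exact cluster_unique h.choose_spec hsi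
    have cl_mem : ∀ {s : V}, s ∈ S → s ∈ C (cl s) := by
      intro s hs
      rw [hSdef] at hs
      obtain ⟨i, hi⟩ := Set.mem_iUnion.mp hs
      rw [cl_eq hi]; exact hi
    -- connectors
    have conn : ∀ i : Fin p, ¬ DistIsolated G k C i →
        ∃ u v : V, G.Adj u v ∧ Rch G S u ∧ Rch G S v ∧
          dd G S u + 1 + dd G S v ≤ k ∧
          cl (rootOf G S u) = i ∧ cl (rootOf G S v) ≠ i := by
      intro i hniso
      simp only [DistIsolated, FarApart] at hniso
      push_neg at hniso
      obtain ⟨j, hji, a, ha, b, hb, wab, hlen⟩ := hniso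
      have haS : a ∈ S := by rw [hSdef]; exact Set.mem_iUnion.mpr ⟨i, ha⟩
      have hbS : b ∈ S := by rw [hSdef]; exact Set.mem_iUnion.mpr ⟨j, hb⟩
      have hlen0 : wab.length ≠ 0 := by
        intro h0
        have hab : a = b := wab.eq_of_length_eq_zero h0
        exact hji (cluster_unique (hab ▸ ha) hb).symm
      have hcrtb : cl (rootOf G S (wab.getVert wab.length)) ≠ i := by
        rw [wab.getVert_length, rootOf_of_zero (dd_zero_of_mem hbS), cl_eq hb]
        exact hji
      have hex : ∃ n, cl (rootOf G S (wab.getVert n)) ≠ i := ⟨wab.length, hcrtb⟩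
      set n₀ := Nat.find hex with hn₀def
      have hspec : cl (rootOf G S (wab.getVert n₀)) ≠ i := Nat.find_spec hex
      have hmin : ∀ m, m < n₀ → cl (rootOf G S (wab.getVert m)) = i := fun m hm =>
        not_not.mp (Nat.find_min hex hm)
      have hn₀le : n₀ ≤ wab.length := Nat.find_min' hex hcrtb
      have hn₀0 : n₀ ≠ 0 := by
        intro h0
        apply hspec
        rw [h0, wab.getVert_zero, rootOf_of_zero (dd_zero_of_mem haS), cl_eq ha]
      obtain ⟨w1, -, h1, -⟩ := walk_split wab (n₀ - 1) (by omega)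
      obtain ⟨-, w2, -, h2'⟩ := walk_split wab n₀ (by omega)
      refine ⟨wab.getVert (n₀ - 1), wab.getVert n₀, ?_,
        ⟨w1.reverse.length, a, haS, w1.reverse, rfl⟩,
        ⟨w2.length, b, hbS, w2, rfl⟩, ?_, hmin _ (by omega), hspec⟩
      · have h3 := wab.adj_getVert_succ (i := n₀ - 1) (by omega)
        rwa [show n₀ - 1 + 1 = n₀ from by omega] at h3
      · have hd1 : dd G S (wab.getVert (n₀ - 1)) ≤ n₀ - 1 := by
          have h4 : (n₀ - 1) ∈ lengths G S (wab.getVert (n₀ - 1)) :=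
            ⟨a, haS, w1.reverse, by simp [h1]⟩
          exact Nat.sInf_le h4
        have hd2 : dd G S (wab.getVert n₀) ≤ wab.length - n₀ := Nat.sInf_le ⟨b, hbS, w2, h2'⟩
        omega
    choose! uc vc hconn using conn
    set NI : Finset (Fin p) := Finset.univ.filter (fun i => ¬ DistIsolated G k C i) with hNIdef
    have hNI : ∀ {i}, i ∈ NI → ¬ DistIsolated G k C i := by
      intro i hi
      rw [hNIdef] at hi
      exact (Finset.mem_filter.mp hi).2
    have hAdj : ∀ i ∈ NI, G.Adj (uc i) (vc i) := fun i hi => (hconn i (hNI hi)).1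
    have hRu : ∀ i ∈ NI, Rch G S (uc i) := fun i hi => (hconn i (hNI hi)).2.1
    have hRv : ∀ i ∈ NI, Rch G S (vc i) := fun i hi => (hconn i (hNI hi)).2.2.1
    have hKi : ∀ i ∈ NI, dd G S (uc i) + 1 + dd G S (vc i) ≤ k := fun i hi =>
      (hconn i (hNI hi)).2.2.2.1
    have hCu : ∀ i ∈ NI, cl (rootOf G S (uc i)) = i := fun i hi =>
      (hconn i (hNI hi)).2.2.2.2.1
    have hCv : ∀ i ∈ NI, cl (rootOf G S (vc i)) ≠ i := fun i hi =>
      (hconn i (hNI hi)).2.2.2.2.2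
    have hmemu : ∀ i ∈ NI, rootOf G S (uc i) ∈ C i := by
      intro i hi
      have h1 := cl_mem (rootOf_mem (hRu i hi))
      rwa [hCu i hi] at h1
    have hmemv : ∀ i ∈ NI, rootOf G S (vc i) ∈ C (cl (rootOf G S (vc i))) := fun i hi =>
      cl_mem (rootOf_mem (hRv i hi))
    have hrtune : ∀ i ∈ NI, rootOf G S (uc i) ≠ rootOf G S (vc i) := by
      intro i hi heq
      apply hCv i hi
      rw [← heq]
      exact hCu i hi
    set Roots : Finset V := NI.image (fun i => rootOf G S (vc i)) with hRootsdef
    set QS : V → Set V := fun ρ =>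
      {w | ∃ i, i ∈ NI ∧ rootOf G S (vc i) = ρ ∧ (onP G S w (vc i) ∨ onP G S w (uc i))}
      with hQSdef
    have memQS : ∀ {ρ w}, w ∈ QS ρ ↔
        ∃ i, i ∈ NI ∧ rootOf G S (vc i) = ρ ∧ (onP G S w (vc i) ∨ onP G S w (uc i)) := by
      intro ρ w
      rw [hQSdef]
      exact Iff.rfl
    set PTf : V → V → V := fun ρ w =>
      if rootOf G S w = ρ then parS G S w
      else if dd G S w = dd G S (uc (cl (rootOf G S w))) then vc (cl (rootOf G S w))
      else (parS G S)^[dd G S (uc (cl (rootOf G S w))) - dd G S w - 1] (uc (cl (rootOf G S w)))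
      with hPTdef
    set rkf : V → V → ℕ := fun ρ w =>
      if rootOf G S w = ρ then dd G S w
      else dd G S (vc (cl (rootOf G S w))) + 1 + (dd G S (uc (cl (rootOf G S w))) - dd G S w)
      with hrkdef
    have PT_cell : ∀ {ρ w : V}, rootOf G S w = ρ → PTf ρ w = parS G S w := by
      intro ρ w h
      simp only [hPTdef]
      rw [if_pos h]
    have PT_pend : ∀ {ρ w : V} {i : Fin p}, rootOf G S w ≠ ρ → cl (rootOf G S w) = i →
        PTf ρ w = if dd G S w = dd G S (uc i) then vc i
          else (parS G S)^[dd G S (uc i) - dd G S w - 1] (uc i) := by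
      intro ρ w i h hcl
      simp only [hPTdef]
      rw [if_neg h, hcl]
    have rk_cell : ∀ {ρ w : V}, rootOf G S w = ρ → rkf ρ w = dd G S w := by
      intro ρ w h
      simp only [hrkdef]
      rw [if_pos h]
    have rk_pend : ∀ {ρ w : V} {i : Fin p}, rootOf G S w ≠ ρ → cl (rootOf G S w) = i →
        rkf ρ w = dd G S (vc i) + 1 + (dd G S (uc i) - dd G S w) := by
      intro ρ w i h hcl
      simp only [hrkdef]
      rw [if_neg h, hcl]
    have memQcases : ∀ {ρ w}, w ∈ QS ρ →
        (rootOf G S w = ρ ∧ ∃ i, i ∈ NI ∧ rootOf G S (vc i) = ρ ∧ onP G S w (vc i)) ∨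
        (rootOf G S w ≠ ρ ∧ ∃ i, i ∈ NI ∧ rootOf G S (vc i) = ρ ∧ onP G S w (uc i) ∧
          cl (rootOf G S w) = i) := by
      intro ρ w hw
      obtain ⟨i, hiNI, hρeq, hon | hon⟩ := memQS.mp hw
      · exact Or.inl ⟨by rw [hon.rootOf_eq, hρeq], i, hiNI, hρeq, hon⟩
      · refine Or.inr ⟨?_, i, hiNI, hρeq, hon, ?_⟩
        · rw [hon.rootOf_eq]
          intro heq
          apply hCv i hiNI
          rw [← hρeq] at heq
          rw [← heq]
          exact hCu i hiNI
        · rw [hon.rootOf_eq]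
          exact hCu i hiNI
    have memRoots : ∀ {ρ}, ρ ∈ Roots ↔ ∃ i, i ∈ NI ∧ rootOf G S (vc i) = ρ := by
      intro ρ
      rw [hRootsdef]
      simp [Finset.mem_image]
    have hρS : ∀ {ρ}, ρ ∈ Roots → ρ ∈ S := by
      intro ρ h
      obtain ⟨i, hi, rfl⟩ := memRoots.mp h
      exact rootOf_mem (hRv i hi)
    have hρdd : ∀ {ρ}, ρ ∈ Roots → dd G S ρ = 0 := fun h => dd_zero_of_mem (hρS h)
    have hρrt : ∀ {ρ}, ρ ∈ Roots → rootOf G S ρ = ρ := fun h => rootOf_of_zero (hρdd h)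
    have hQρ : ∀ {ρ}, ρ ∈ Roots → ρ ∈ QS ρ := by
      intro ρ h
      obtain ⟨i, hi, hiρ⟩ := memRoots.mp h
      exact memQS.mpr ⟨i, hi, hiρ, Or.inl (hiρ ▸ onP_rootOf (hRv i hi))⟩
    have hstepAll : ∀ ρ ∈ Roots, ∀ w ∈ QS ρ, w ≠ ρ →
        PTf ρ w ∈ QS ρ ∧ G.Adj w (PTf ρ w) ∧ rkf ρ w = rkf ρ (PTf ρ w) + 1 := by
      intro ρ hρR w hwQ hwρ
      rcases memQcases hwQ with ⟨hrtw, i, hiNI, hρeq, hon⟩ | ⟨hrtw, i, hiNI, hρeq, hon, hclw⟩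
      · have hRw := hon.rch
        have hD0 : dd G S w ≠ 0 := by
          intro h0
          exact hwρ (by rw [← hrtw, rootOf_of_zero h0])
        have hps := par_spec hRw hD0
        have hPT : PTf ρ w = parS G S w := PT_cell hrtw
        have hrtp : rootOf G S (parS G S w) = ρ := by
          rw [(onP_par (onP_self hRw) hD0).rootOf_eq, hrtw]
        refine ⟨?_, ?_, ?_⟩
        · rw [hPT]
          exact memQS.mpr ⟨i, hiNI, hρeq, Or.inl (onP_par hon hD0)⟩
        · rw [hPT]; exact hps.1
        · rw [hPT, rk_cell hrtw, rk_cell hrtp]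
          have h5 := hps.2.2
          omega
      · have hRu' := hRu i hiNI
        have hdle := hon.dd_le
        by_cases hDeq : dd G S w = dd G S (uc i)
        · have hweq : w = uc i := by
            have h1 := hon.eq_iter
            rw [hDeq, Nat.sub_self] at h1
            simpa using h1
          have hPT : PTf ρ w = vc i := by
            rw [PT_pend hrtw hclw, if_pos hDeq]
          refine ⟨?_, ?_, ?_⟩
          · rw [hPT]
            exact memQS.mpr ⟨i, hiNI, hρeq, Or.inl (onP_self (hRv i hiNI))⟩
          · rw [hPT, hweq]; exact hAdj i hiNI
          · rw [hPT, rk_pend hrtw hclw, rk_cell hρeq]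
            omega
        · have hDlt : dd G S w < dd G S (uc i) := lt_of_le_of_ne hdle hDeq
          have hPT : PTf ρ w = (parS G S)^[dd G S (uc i) - dd G S w - 1] (uc i) := by
            rw [PT_pend hrtw hclw, if_neg hDeq]
          have hony : onP G S ((parS G S)^[dd G S (uc i) - dd G S w - 1] (uc i)) (uc i) :=
            ⟨hRu', _, by omega, rfl⟩
          have hdy := (iter_spec hRu' (dd G S (uc i) - dd G S w - 1) (by omega)).2
          have hpy : parS G S ((parS G S)^[dd G S (uc i) - dd G S w - 1] (uc i)) = w := by
            have h6 : parS G S ((parS G S)^[dd G S (uc i) - dd G S w - 1] (uc i)) =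
                (parS G S)^[dd G S (uc i) - dd G S w - 1 + 1] (uc i) :=
              (Function.iterate_succ_apply' (parS G S) _ (uc i)).symm
            rw [h6, show dd G S (uc i) - dd G S w - 1 + 1 = dd G S (uc i) - dd G S w from by omega]
            exact hon.eq_iter.symm
          have hrty : rootOf G S ((parS G S)^[dd G S (uc i) - dd G S w - 1] (uc i)) ≠ ρ := by
            rw [hony.rootOf_eq, ← hon.rootOf_eq]
            exact hrtw
          have hcly : cl (rootOf G S ((parS G S)^[dd G S (uc i) - dd G S w - 1] (uc i))) = i := by
            rw [hony.rootOf_eq, ← hon.rootOf_eq]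
            exact hclw
          refine ⟨?_, ?_, ?_⟩
          · rw [hPT]
            exact memQS.mpr ⟨i, hiNI, hρeq, Or.inr hony⟩
          · rw [hPT]
            have hg := (par_spec hony.rch (by omega)).1
            rw [hpy] at hg
            exact hg.symm
          · rw [hPT, rk_pend hrtw hclw, rk_pend hrty hcly]
            omega
    have hzeroAll : ∀ ρ ∈ Roots, ∀ w ∈ QS ρ, rkf ρ w = 0 → w = ρ := by
      intro ρ hρR w hwQ h0
      rcases memQcases hwQ with ⟨hrtw, -⟩ | ⟨hrtw, i, hiNI, hρeq, hon, hclw⟩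
      · rw [rk_cell hrtw] at h0
        rw [← hrtw, rootOf_of_zero h0]
      · rw [rk_pend hrtw hclw] at h0
        omega
    have hrkle : ∀ ρ ∈ Roots, ∀ w ∈ QS ρ, rkf ρ w ≤ k := by
      intro ρ hρR w hwQ
      rcases memQcases hwQ with ⟨hrtw, i, hiNI, hρeq, hon⟩ | ⟨hrtw, i, hiNI, hρeq, hon, hclw⟩
      · rw [rk_cell hrtw]
        have h1 := hon.dd_le
        have h2 := hKi i hiNI
        omega
      · rw [rk_pend hrtw hclw]
        have h1 := hon.dd_le
        have h2 := hKi i hiNI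
        omega
    have leafChar : ∀ ρ ∈ Roots, ∀ v, IsLeaf (treeSub G (QS ρ) ρ (PTf ρ)) ρ v →
        ∃ i, i ∈ NI ∧ rootOf G S (vc i) = ρ ∧ v = rootOf G S (uc i) := by
      intro ρ hρR v hleaf
      obtain ⟨hvQ, hvρ, hnoc⟩ := (treeSub_leaf_iff (hstepAll ρ hρR) v).mp hleaf
      rcases memQcases hvQ with ⟨hrtv, i, hiNI, hρeq, hon⟩ | ⟨hrtv, i, hiNI, hρeq, hon, hclv⟩
      · exfalso
        have hd0 : dd G S v ≠ 0 := fun h0 => hvρ (by rw [← hrtv, rootOf_of_zero h0])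
        by_cases hveq : dd G S v = dd G S (vc i)
        · have hv_eq : v = vc i := by
            have h1 := hon.eq_iter
            rw [hveq, Nat.sub_self] at h1
            simpa using h1
          have hrtu_ne : rootOf G S (uc i) ≠ ρ := by
            intro h
            exact hrtune i hiNI (h.trans hρeq.symm)
          refine hnoc (uc i) (memQS.mpr ⟨i, hiNI, hρeq, Or.inr (onP_self (hRu i hiNI))⟩) ?_ ?_
          · intro hueq
            apply hrtu_ne
            rw [← hueq] at hρR ⊢
            exact hρrt hρR
          · rw [PT_pend hrtu_ne (hCu i hiNI), if_pos rfl]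
            exact hv_eq.symm
        · have hdlt : dd G S v < dd G S (vc i) := lt_of_le_of_ne hon.dd_le hveq
          obtain ⟨y, hony, hpy, hdy⟩ := onP_pred hon hdlt
          refine hnoc y (memQS.mpr ⟨i, hiNI, hρeq, Or.inl hony⟩) ?_ ?_
          · intro hyρ
            rw [hyρ, hρdd hρR] at hdy
            omega
          · rw [PT_cell (by rw [hony.rootOf_eq, hρeq])]
            exact hpy
      · by_cases hd0 : dd G S v = 0
        · refine ⟨i, hiNI, hρeq, ?_⟩
          rw [← rootOf_of_zero hd0, hon.rootOf_eq]
        · exfalso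
          have honp := onP_par hon hd0
          have h1 : rootOf G S (parS G S v) = rootOf G S v := by
            rw [honp.rootOf_eq, ← hon.rootOf_eq]
          refine hnoc (parS G S v) (memQS.mpr ⟨i, hiNI, hρeq, Or.inr honp⟩) ?_ ?_
          · intro hpρ
            apply hrtv
            rw [← h1, hpρ, hρrt hρR]
          · have hdp := (par_spec hon.rch hd0).2.2
            have hrtp : rootOf G S (parS G S v) ≠ ρ := by rw [h1]; exact hrtv
            have hclp : cl (rootOf G S (parS G S v)) = i := by rw [h1]; exact hclv
            have hdle := hon.dd_le
            rw [PT_pend hrtp hclp, if_neg (by omega),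
              show dd G S (uc i) - dd G S (parS G S v) - 1 = dd G S (uc i) - dd G S v from by
                omega]
            exact hon.eq_iter.symm
    have leafExists : ∀ i ∈ NI,
        IsLeaf (treeSub G (QS (rootOf G S (vc i))) (rootOf G S (vc i))
          (PTf (rootOf G S (vc i)))) (rootOf G S (vc i)) (rootOf G S (uc i)) := by
      intro i hiNI
      have hρR : rootOf G S (vc i) ∈ Roots := memRoots.mpr ⟨i, hiNI, rfl⟩
      refine (treeSub_leaf_iff (hstepAll _ hρR) _).mpr
        ⟨memQS.mpr ⟨i, hiNI, rfl, Or.inr (onP_rootOf (hRu i hiNI))⟩, hrtune i hiNI, ?_⟩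
      intro y hyQ hyρ hPTy
      have hw0 : dd G S (rootOf G S (uc i)) = 0 := dd_zero_of_mem (rootOf_mem (hRu i hiNI))
      rcases memQcases hyQ with ⟨hrty, i', hi'NI, hρeq', hon'⟩ |
        ⟨hrty, i', hi'NI, hρeq', hon', hcl'⟩
      · have hd0 : dd G S y ≠ 0 := fun h0 => hyρ (by rw [← hrty, rootOf_of_zero h0])
        rw [PT_cell hrty] at hPTy
        have h1 : rootOf G S (parS G S y) = rootOf G S y :=
          (onP_par (onP_self hon'.rch) hd0).rootOf_eq
        rw [hPTy, rootOf_of_zero hw0] at h1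
        exact hrtune i hiNI (h1.trans hrty)
      · rw [PT_pend hrty hcl'] at hPTy
        by_cases hdeq : dd G S y = dd G S (uc i')
        · rw [if_pos hdeq] at hPTy
          apply hrtune i hiNI
          calc rootOf G S (uc i) = rootOf G S (rootOf G S (uc i)) := (rootOf_of_zero hw0).symm
            _ = rootOf G S (vc i') := by rw [hPTy]
            _ = rootOf G S (vc i) := hρeq'
        · rw [if_neg hdeq] at hPTy
          have hdlt : dd G S y < dd G S (uc i') := lt_of_le_of_ne hon'.dd_le hdeq
          have h2 := (iter_spec (hRu i' hi'NI) (dd G S (uc i') - dd G S y - 1) (by omega)).2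
          rw [hPTy, hw0] at h2
          omega
    set rootF : Fin Roots.card → V := fun t => ((Roots.equivFin.symm t) : V) with hrootF
    have hrootR : ∀ t, rootF t ∈ Roots := fun t => (Roots.equivFin.symm t).2
    have hrootInj : ∀ t t', rootF t = rootF t' → t = t' := by
      intro t t' h
      have h2 : Roots.equivFin.symm t = Roots.equivFin.symm t' := Subtype.ext h
      exact Roots.equivFin.symm.injective h2
    refine ⟨Roots.card, fun t => treeSub G (QS (rootF t)) (rootF t) (PTf (rootF t)), rootF,
      ?_, ?_, ?_, ?_, ?_, ?_, ?_⟩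
    · intro t
      exact hQρ (hrootR t)
    · intro t
      exact treeSub_isTree (hQρ (hrootR t)) (hstepAll _ (hrootR t)) (hzeroAll _ (hrootR t))
    · intro t
      exact ⟨cl (rootF t), cl_mem (hρS (hrootR t))⟩
    · intro t v hleaf
      obtain ⟨i, hiNI, -, rfl⟩ := leafChar _ (hrootR t) v hleaf
      exact ⟨i, hmemu i hiNI⟩
    · intro t v hv
      obtain ⟨pw, hpw⟩ := walkToRoot (hQρ (hrootR t)) (hstepAll _ (hrootR t))
        (hzeroAll _ (hrootR t)) (rkf (rootF t) v) v hv le_rfl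
      exact ⟨hv, hQρ (hrootR t), pw, le_trans hpw (hrkle _ (hrootR t) v hv)⟩
    · intro i hniso
      have hiNI : i ∈ NI := by
        rw [hNIdef]
        exact Finset.mem_filter.mpr ⟨Finset.mem_univ i, hniso⟩
      have hρR : rootOf G S (vc i) ∈ Roots := memRoots.mpr ⟨i, hiNI, rfl⟩
      have hval : rootF (Roots.equivFin ⟨rootOf G S (vc i), hρR⟩) = rootOf G S (vc i) := by
        rw [hrootF]
        simp
      refine ⟨rootOf G S (uc i), ⟨hmemu i hiNI, Roots.equivFin ⟨_, hρR⟩, ?_, ?_⟩, ?_⟩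
      · simp only [hval]
        exact leafExists i hiNI
      · refine ⟨cl (rootOf G S (vc i)), hCv i hiNI, ?_⟩
        simp only [hval]
        exact hmemv i hiNI
      · rintro w' ⟨hw'Ci, t', hleaf', j', hj'i, hroot'⟩
        obtain ⟨i', hi'NI, hρeq', rfl⟩ := leafChar _ (hrootR t') w' hleaf'
        have hii : i' = i := cluster_unique (hmemu i' hi'NI) hw'Ci
        rw [hii]
    · intro e he
      induction e using Sym2.inductionOn with
      | hf a b =>
        show {t : Fin Roots.card |
          s(a, b) ∈ (treeSub G (QS (rootF t)) (rootF t) (PTf (rootF t))).edgeSet}.ncard ≤ 4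
        have hone : ∀ c : V, ({t | rootF t = c} : Set (Fin Roots.card)).ncard ≤ 1 := by
          intro c
          rcases Set.eq_empty_or_nonempty {t | rootF t = c} with h | ⟨t₀, ht₀⟩
          · rw [h]; simp
          · have hsub2 : {t : Fin Roots.card | rootF t = c} ⊆ {t₀} := by
              intro t ht
              exact hrootInj t t₀ (ht.trans ht₀.symm)
            calc ({t : Fin Roots.card | rootF t = c}).ncard ≤ ({t₀} : Set (Fin Roots.card)).ncard :=
                Set.ncard_le_ncard hsub2 (Set.toFinite _)
              _ = 1 := Set.ncard_singleton t₀
        have hsub : {t : Fin Roots.card |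
              s(a, b) ∈ (treeSub G (QS (rootF t)) (rootF t) (PTf (rootF t))).edgeSet} ⊆
            ({t | rootF t = rootOf G S a} ∪
              {t | rootF t = rootOf G S (vc (cl (rootOf G S a)))}) ∪
            ({t | rootF t = rootOf G S b} ∪
              {t | rootF t = rootOf G S (vc (cl (rootOf G S b)))}) := by
          intro t ht
          simp only [Set.mem_setOf_eq, Subgraph.mem_edgeSet] at ht
          obtain ⟨haQ, hbQ, -, hor⟩ := ht
          rcases hor with ⟨haρ, -⟩ | ⟨hbρ, -⟩
          · rcases memQcases haQ with ⟨hrta, -⟩ | ⟨-, i1, hi1, hρeq1, -, hcl1⟩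
            · exact Or.inl (Or.inl hrta.symm)
            · refine Or.inl (Or.inr ?_)
              show rootF t = rootOf G S (vc (cl (rootOf G S a)))
              rw [hcl1]
              exact hρeq1.symm
          · rcases memQcases hbQ with ⟨hrtb, -⟩ | ⟨-, i1, hi1, hρeq1, -, hcl1⟩
            · exact Or.inr (Or.inl hrtb.symm)
            · refine Or.inr (Or.inr ?_)
              show rootF t = rootOf G S (vc (cl (rootOf G S b)))
              rw [hcl1]
              exact hρeq1.symm
        have h4 := Set.ncard_le_ncard hsub (Set.toFinite _)
        have h5 := Set.ncard_union_le
          ({t : Fin Roots.card | rootF t = rootOf G S a} ∪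
            {t | rootF t = rootOf G S (vc (cl (rootOf G S a)))})
          ({t : Fin Roots.card | rootF t = rootOf G S b} ∪
            {t | rootF t = rootOf G S (vc (cl (rootOf G S b)))})
        have h6 := Set.ncard_union_le ({t : Fin Roots.card | rootF t = rootOf G S a})
          ({t | rootF t = rootOf G S (vc (cl (rootOf G S a)))})
        have h7 := Set.ncard_union_le ({t : Fin Roots.card | rootF t = rootOf G S b})
          ({t | rootF t = rootOf G S (vc (cl (rootOf G S b)))})
        have h8 := hone (rootOf G S a)
        have h9 := hone (rootOf G S (vc (cl (rootOf G S a))))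
        have h10 := hone (rootOf G S b)
        have h11 := hone (rootOf G S (vc (cl (rootOf G S b))))
        omega
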